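/- Under the stated assumptions, S(η) = S(η') − (1/2)·θ(η, η−η') − (1/2)·θ(η', η−η') for all η, η' ∈ A. -/

import Mathlib

/-- Let `A` be an affine space over the real vector space `E`,
`θ : A × E → ℝ` real-linear in its second argument, `B` real-bilinear with
`θ(ξ+η, ξ') = θ(η,ξ') + B(ξ,ξ')`.  If `S : A → ℝ` is such that for every `η ∈ A`
and `ξ ∈ E` the function `t ↦ S(t·ξ + η)` has derivative `−θ(t·ξ + η, ξ)` at every
`t ∈ ℝ`, then `S(η) = S(η') − (1/2)·θ(η, η−η') − (1/2)·θ(η', η−η')` for all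
`η, η' ∈ A`. -/
theorem statement16
    {E A : Type*} [AddCommGroup E] [Module ℝ E] [AddTorsor E A]
    (θ : A → E → ℝ) (hθ : ∀ η : A, IsLinearMap ℝ (θ η))
    (B : E → E → ℝ)
    (hB₁ : ∀ y : E, IsLinearMap ℝ (fun x => B x y))
    (hB₂ : ∀ x : E, IsLinearMap ℝ (B x))
    (hθB : ∀ (η : A) (ξ ξ' : E), θ (ξ +ᵥ η) ξ' = θ η ξ' + B ξ ξ')
    (S : A → ℝ)
    (hS : ∀ (η : A) (ξ : E) (t : ℝ),
      HasDerivAt (fun s : ℝ => S ((s • ξ) +ᵥ η)) (-(θ ((t • ξ) +ᵥ η) ξ)) t) :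
    ∀ η η' : A,
      S η = S η' - (1/2 : ℝ) * θ η (η -ᵥ η') - (1/2 : ℝ) * θ η' (η -ᵥ η') := by
  intro η η'
  set ξ : E := η -ᵥ η' with hξ
  set c : ℝ := θ η' ξ with hc
  set d : ℝ := B ξ ξ with hd
  have hderiv : ∀ t : ℝ,
      HasDerivAt (fun t : ℝ => S ((t • ξ) +ᵥ η') + t * c + t ^ 2 * (d / 2)) 0 t := by
    intro t
    have h1 : HasDerivAt (fun t : ℝ => t * c) c t := by
      simpa using (hasDerivAt_id t).mul_const c
    have h2 : HasDerivAt (fun t : ℝ => t ^ 2 * (d / 2)) (t * d) t := by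
      have := (hasDerivAt_pow 2 t).mul_const (d / 2)
      refine this.congr_deriv ?_
      push_cast; ring
    have h3 := ((hS η' ξ t).add h1).add h2
    refine h3.congr_deriv ?_
    have hθt : θ ((t • ξ) +ᵥ η') ξ = c + t * d := by
      rw [hθB, hc, hd, (hB₁ ξ).map_smul]
      simp [smul_eq_mul]
    rw [hθt]; ring
  have hconst := is_const_of_deriv_eq_zero
    (f := fun t : ℝ => S ((t • ξ) +ᵥ η') + t * c + t ^ 2 * (d / 2))
    (fun t => (hderiv t).differentiableAt) (fun t => (hderiv t).deriv) 1 0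
  simp only [one_smul, zero_smul, zero_vadd, hξ, vsub_vadd] at hconst
  have hθη : θ η ξ = c + d := by
    have h := hθB η' ξ ξ
    rw [hξ, vsub_vadd] at h
    simpa [hc, hd, hξ] using h
  rw [hθη]
  norm_num at hconst ⊢
  linarith
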